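/- Let D₀ = {d¹, …, dᵐ} ⊆ ℝ² be a finite set of m directions that positively spans ℝ², i.e., { Σᵢ λᵢ dⁱ : λᵢ ≥ 0 for all i } = ℝ². Let X ⊆ ℝ² be a polytope with exactly n_v vertices (extreme points). Then there exists a finite set D ⊆ ℝ² with D₀ ⊆ D and |D| ≤ (3·n_v + 1) + (m - 3) such that D determines X within the class of all polytopes in ℝ². (Lemma on replacing the initialization set of Algorithm 1: when the known vertex bound exceeds n_v, at most (3n_v + 1) + (m - 3) oracle calls suffice.) -/

import Mathlib

open RealInnerProductSpace

/-- Support function of a subset of `ℝⁿ`. -/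
noncomputable def supp {n : ℕ} (X : Set (EuclideanSpace ℝ (Fin n)))
    (d : EuclideanSpace ℝ (Fin n)) : ℝ :=
  sSup ((fun v => ⟪v, d⟫) '' X)

/-- `X` is a polytope: the convex hull of a nonempty finite set. -/
def IsPolytope {n : ℕ} (X : Set (EuclideanSpace ℝ (Fin n))) : Prop :=
  ∃ F : Finset (EuclideanSpace ℝ (Fin n)), F.Nonempty ∧ X = convexHull ℝ (F : Set _)

/-- The finite direction set `D` determines `X` within the class `𝒞`. -/
def Determines {n : ℕ} (𝒞 : Set (Set (EuclideanSpace ℝ (Fin n))))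
    (D : Finset (EuclideanSpace ℝ (Fin n))) (X : Set (EuclideanSpace ℝ (Fin n))) : Prop :=
  ∀ Y ∈ 𝒞, (∀ d ∈ D, supp Y d = supp X d) → Y = X

abbrev E2 := EuclideanSpace ℝ (Fin 2)
noncomputable instance : DecidableEq E2 := Classical.decEq _
noncomputable def Jr (v : E2) : E2 := !₂[-(v 1), v 0]
def crs (a b : E2) : ℝ := a 0 * b 1 - a 1 * b 0
lemma inner_E2 (x y : E2) : ⟪x, y⟫ = x 0 * y 0 + x 1 * y 1 := by
  simp [PiLp.inner_apply, RCLike.inner_apply, Fin.sum_univ_two, mul_comm]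
lemma Jr0 (v : E2) : Jr v 0 = -(v 1) := rfl
lemma Jr1 (v : E2) : Jr v 1 = v 0 := rfl
lemma inner_Jr (s t : E2) : ⟪t, Jr s⟫ = crs s t := by
  simp [inner_E2, Jr0, Jr1, crs]; ring
lemma E2_sub_apply (a b : E2) (i : Fin 2) : (a - b) i = a i - b i := rfl
lemma eq_of_inner_inner (t1 t2 z w : E2) (hc : crs t1 t2 ≠ 0)
    (h1 : ⟪t1, z⟫ = ⟪t1, w⟫) (h2 : ⟪t2, z⟫ = ⟪t2, w⟫) : z = w := by
  have e1 : t1 0 * (z 0 - w 0) + t1 1 * (z 1 - w 1) = 0 := by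
    rw [inner_E2, inner_E2] at h1; linarith
  have e2 : t2 0 * (z 0 - w 0) + t2 1 * (z 1 - w 1) = 0 := by
    rw [inner_E2, inner_E2] at h2; linarith
  have h3 : crs t1 t2 * (z 0 - w 0) = 0 := by
    unfold crs; linear_combination t2 1 * e1 - t1 1 * e2
  have h4 : crs t1 t2 * (z 1 - w 1) = 0 := by
    unfold crs; linear_combination (-(t2 0)) * e1 + t1 0 * e2
  have hz0 : z 0 = w 0 := by
    rcases mul_eq_zero.1 h3 with h|h; · exact absurd h hc
    · linarith
  have hz1 : z 1 = w 1 := by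
    rcases mul_eq_zero.1 h4 with h|h; · exact absurd h hc
    · linarith
  refine PiLp.ext fun i => ?_
  fin_cases i <;> assumption

lemma inner_left_linear (d : E2) : IsLinearMap ℝ (fun x : E2 => (⟪x, d⟫ : ℝ)) :=
  ⟨fun a b => inner_add_left a b d, fun c a => real_inner_smul_left a d c⟩

lemma hull_inner_le {F : Finset E2} {d : E2} {M : ℝ} (h : ∀ w ∈ F, ⟪w, d⟫ ≤ M) :
    ∀ x ∈ convexHull ℝ (F : Set E2), ⟪x, d⟫ ≤ M := fun x hx =>
  convexHull_min (fun w hw => h w hw) (convex_halfSpace_le (inner_left_linear d) M) hx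

lemma supp_isGreatest {X : Set E2} (hX : IsPolytope X) (d : E2) :
    IsGreatest ((fun v => ⟪v, d⟫) '' X) (supp X d) := by
  obtain ⟨F, hFne, rfl⟩ := hX
  obtain ⟨v0, hv0, hmax⟩ := F.exists_max_image (fun v => ⟪v, d⟫) hFne
  have hg : IsGreatest ((fun v => ⟪v, d⟫) '' (convexHull ℝ (F : Set E2))) ⟪v0, d⟫ := by
    constructor
    · exact ⟨v0, subset_convexHull ℝ _ hv0, rfl⟩
    · rintro r ⟨x, hx, rfl⟩
      exact hull_inner_le hmax x hx
  have : supp (convexHull ℝ (F : Set E2)) d = ⟪v0, d⟫ := hg.csSup_eq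
  rw [this]; exact hg

lemma inner_le_supp {X : Set E2} (hX : IsPolytope X) {x : E2} (hx : x ∈ X) (d : E2) :
    ⟪x, d⟫ ≤ supp X d := (supp_isGreatest hX d).2 ⟨x, hx, rfl⟩

lemma exists_supp {X : Set E2} (hX : IsPolytope X) (d : E2) :
    ∃ x ∈ X, ⟪x, d⟫ = supp X d := by
  obtain ⟨x, hx, h⟩ := (supp_isGreatest hX d).1
  exact ⟨x, hx, h⟩

lemma supp_eq {X : Set E2} (hX : IsPolytope X) {v : E2} (hv : v ∈ X) {d : E2}
    (hdom : ∀ x ∈ X, ⟪x, d⟫ ≤ ⟪v, d⟫) : supp X d = ⟪v, d⟫ := by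
  refine le_antisymm ?_ (inner_le_supp hX hv d)
  obtain ⟨x, hx, hxe⟩ := exists_supp hX d
  rw [← hxe]; exact hdom x hx

lemma unique_max {F : Finset E2} {v : E2} (hv : v ∈ F) {e : E2}
    (hstrict : ∀ w ∈ F, w ≠ v → ⟪w, e⟫ < ⟪v, e⟫) {y : E2}
    (hy : y ∈ convexHull ℝ (F : Set E2)) (heq : ⟪y, e⟫ = ⟪v, e⟫) : y = v := by
  rw [Finset.convexHull_eq] at hy
  obtain ⟨w, hw0, hw1, hwy⟩ := hy
  rw [Finset.centerMass_eq_of_sum_1 _ _ hw1] at hwy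
  have hinner : ⟪y, e⟫ = ∑ i ∈ F, w i * ⟪i, e⟫ := by
    rw [← hwy, sum_inner]
    exact Finset.sum_congr rfl fun i _ => by rw [id_eq, real_inner_smul_left]
  have hzero : ∀ i ∈ F, i ≠ v → w i = 0 := by
    by_contra h
    push_neg at h
    obtain ⟨i0, hi0F, hi0v, hi0⟩ := h
    have hi0pos : 0 < w i0 := lt_of_le_of_ne (hw0 i0 hi0F) (Ne.symm hi0)
    have hlt : ∑ i ∈ F, w i * ⟪i, e⟫ < ∑ i ∈ F, w i * ⟪v, e⟫ := by
      apply Finset.sum_lt_sum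
      · intro i hi
        rcases eq_or_ne i v with rfl | hne
        · exact le_rfl
        · exact mul_le_mul_of_nonneg_left (le_of_lt (hstrict i hi hne)) (hw0 i hi)
      · exact ⟨i0, hi0F, mul_lt_mul_of_pos_left (hstrict i0 hi0F hi0v) hi0pos⟩
    rw [← Finset.sum_mul, hw1, one_mul] at hlt
    rw [hinner] at heq
    linarith
  have hsum : (∑ i ∈ F, w i • id i) = w v • v := by
    apply Finset.sum_eq_single_of_mem v hv
    intro i hi hne
    rw [hzero i hi hne, zero_smul]
  have hwv : w v = 1 := by
    rw [← hw1]
    symm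
    apply Finset.sum_eq_single_of_mem v hv
    intro i hi hne
    exact hzero i hi hne
  rw [← hwy, hsum, hwv, one_smul]

lemma exists_expose {V : Finset E2} {v : E2}
    (hv : v ∉ convexHull ℝ ((V.erase v : Finset E2) : Set E2)) :
    ∃ e : E2, ∀ w ∈ V, w ≠ v → ⟪w, e⟫ < ⟪v, e⟫ := by
  obtain ⟨f, u, hfs, hfx⟩ := geometric_hahn_banach_closed_point
    (convex_convexHull ℝ _) ((V.erase v).finite_toSet.isClosed_convexHull ℝ) hv
  refine ⟨(InnerProductSpace.toDual ℝ E2).symm f, fun w hw hne => ?_⟩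
  have h1 : f w < u := hfs _ (subset_convexHull ℝ _ (Finset.mem_coe.2 (Finset.mem_erase.2 ⟨hne, hw⟩)))
  have h2 : ∀ x : E2, ⟪x, (InnerProductSpace.toDual ℝ E2).symm f⟫ = f x := by
    intro x
    rw [real_inner_comm]
    exact InnerProductSpace.toDual_symm_apply
  rw [h2, h2]
  linarith

lemma extreme_not_mem_erase {X : Set E2} {V : Finset E2} (hXV : X = convexHull ℝ (V : Set E2))
    {v : E2} (hv : v ∈ Set.extremePoints ℝ X) :
    v ∉ convexHull ℝ ((V.erase v : Finset E2) : Set E2) := by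
  intro hmem
  have hsub : (V : Set E2) ⊆ convexHull ℝ ((V.erase v : Finset E2) : Set E2) := by
    intro w hw
    rcases eq_or_ne w v with rfl | hne
    · exact hmem
    · exact subset_convexHull ℝ _ (Finset.mem_coe.2 (Finset.mem_erase.2 ⟨hne, hw⟩))
  have hXeq : X = convexHull ℝ ((V.erase v : Finset E2) : Set E2) := by
    refine le_antisymm ?_ ?_
    · rw [hXV]
      exact convexHull_min hsub (convex_convexHull ℝ _)
    · rw [hXV]
      exact convexHull_mono (by exact_mod_cast Finset.erase_subset v V)
  have : v ∈ ((V.erase v : Finset E2) : Set E2) :=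
    extremePoints_convexHull_subset (hXeq ▸ hv)
  simp at this

lemma exists_smul_of_crs_eq_zero {s t : E2} (h : crs s t = 0) (hs : s ≠ 0) :
    ∃ μ : ℝ, t = μ • s := by
  have hs' : s 0 ≠ 0 ∨ s 1 ≠ 0 := by
    by_contra hc
    push_neg at hc
    exact hs (PiLp.ext fun i => by fin_cases i <;> simp [hc.1, hc.2])
  unfold crs at h
  rcases hs' with h0 | h1
  · refine ⟨t 0 / s 0, PiLp.ext fun i => ?_⟩
    fin_cases i
    · simp [PiLp.smul_apply]; field_simp
    · show t 1 = (t 0 / s 0) * s 1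
      field_simp
      linarith
  · refine ⟨t 1 / s 1, PiLp.ext fun i => ?_⟩
    fin_cases i
    · show t 0 = (t 1 / s 1) * s 0
      field_simp
      linarith
    · simp [PiLp.smul_apply]; field_simp

lemma no_three_collinear {X : Set E2} {a b c : E2}
    (ha : a ∈ Set.extremePoints ℝ X) (hb : b ∈ Set.extremePoints ℝ X)
    (hc : c ∈ Set.extremePoints ℝ X) (hab : a ≠ b) (hac : a ≠ c) (hbc : b ≠ c) :
    crs (b - a) (c - a) ≠ 0 := by
  intro h0
  have haX : a ∈ X := extremePoints_subset ha
  have hbX : b ∈ X := extremePoints_subset hb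
  have hcX : c ∈ X := extremePoints_subset hc
  have hba : b - a ≠ 0 := sub_ne_zero.2 (Ne.symm hab)
  obtain ⟨μ, hμ⟩ := exists_smul_of_crs_eq_zero h0 hba
  have hcab : c = (1 - μ) • a + μ • b := by
    have : c - a = μ • (b - a) := hμ
    have h1 : c = a + μ • (b - a) := by
      rw [← this]; abel
    rw [h1]; module
  rcases lt_trichotomy μ 0 with hμ0 | hμ0 | hμ0
  · -- a ∈ openSegment b c
    have h1μ : 0 < 1 - μ := by linarith
    have hmem : a ∈ openSegment ℝ b c := by
      refine ⟨-μ / (1 - μ), 1 / (1 - μ), div_pos (by linarith) h1μ, by positivity,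
        by field_simp; ring, ?_⟩
      rw [hcab]
      match_scalars <;> field_simp <;> ring
    exact hab ((ha.2 hbX hcX hmem).symm)
  · exact hac (by rw [hcab, hμ0]; simp)
  · rcases lt_trichotomy μ 1 with hμ1 | hμ1 | hμ1
    · have hmem : c ∈ openSegment ℝ a b := ⟨1 - μ, μ, by linarith, hμ0, by ring, hcab.symm⟩
      exact hac (hc.2 haX hbX hmem)
    · exact hbc (by rw [hcab, hμ1]; simp)
    · -- b ∈ openSegment a c
      have hmem : b ∈ openSegment ℝ a c := by
        refine ⟨1 - 1 / μ, 1 / μ,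
          by rw [sub_pos]; exact (div_lt_one (by linarith)).2 (by linarith),
          by positivity, by ring, ?_⟩
        rw [hcab]
        match_scalars <;> field_simp <;> ring
      exact hab (hb.2 haX hcX hmem)

lemma crs_formula (t u e : E2) :
    crs t u * ⟪e, e⟫ = ⟪t, e⟫ * ⟪u, Jr e⟫ - ⟪t, Jr e⟫ * ⟪u, e⟫ := by
  simp only [inner_E2, crs, Jr0, Jr1]
  ring

lemma crs_self (t : E2) : crs t t = 0 := by unfold crs; ring

lemma crs_swap (t u : E2) : crs t u = - crs u t := by unfold crs; ring

lemma inner_self_pos_of_ne {e : E2} (he : e ≠ 0) : 0 < ⟪e, e⟫ := by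
  rw [real_inner_self_eq_norm_sq]
  exact pow_pos (norm_pos_iff.mpr he) 2

lemma vertex_edges {X : Set E2} {V : Finset E2} (hXV : X = convexHull ℝ (V : Set E2))
    (hVext : (V : Set E2) = Set.extremePoints ℝ X) (hV3 : 3 ≤ V.card) {v : E2} (hv : v ∈ V) :
    ∃ w1 ∈ V.erase v, ∃ w2 ∈ V.erase v, w1 ≠ w2 ∧
      (∀ x ∈ V, ⟪x - v, -Jr (w1 - v)⟫ ≤ 0) ∧
      (∀ x ∈ V, ⟪x - v, Jr (w2 - v)⟫ ≤ 0) ∧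
      (∀ z ∈ V.erase v, (∀ x ∈ V, ⟪x - v, -Jr (z - v)⟫ ≤ 0) → z = w1) := by
  have hvx : v ∈ Set.extremePoints ℝ X := by rw [← hVext]; exact hv
  obtain ⟨e, he⟩ := exists_expose (extreme_not_mem_erase hXV hvx)
  -- basic facts
  have hbpos : ∀ w ∈ V.erase v, 0 < ⟪v, e⟫ - ⟪w, e⟫ := by
    intro w hw
    obtain ⟨hwne, hwV⟩ := Finset.mem_erase.1 hw
    linarith [he w hwV hwne]
  have hEne : (V.erase v).Nonempty := by
    rw [← Finset.card_pos, Finset.card_erase_of_mem hv]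
    omega
  have hene : e ≠ 0 := by
    obtain ⟨w, hw⟩ := hEne
    intro h0
    have := hbpos w hw
    rw [h0] at this
    simp at this
  have hee : 0 < ⟪e, e⟫ := inner_self_pos_of_ne hene
  set s : E2 → ℝ := fun w => ⟪w - v, Jr e⟫ / (⟪v, e⟫ - ⟪w, e⟫) with hs
  -- cross identity
  have hkey : ∀ w ∈ V.erase v, ∀ x ∈ V.erase v,
      crs (w - v) (x - v) * ⟪e, e⟫
        = (⟪v, e⟫ - ⟪w, e⟫) * (⟪v, e⟫ - ⟪x, e⟫) * (s w - s x) := by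
    intro w hw x hx
    have hbw := hbpos w hw
    have hbx := hbpos x hx
    have h1 : ⟪w - v, Jr e⟫ = s w * (⟪v, e⟫ - ⟪w, e⟫) := by
      simp only [hs]
      rw [div_mul_cancel₀ _ (ne_of_gt hbw)]
    have h2 : ⟪x - v, Jr e⟫ = s x * (⟪v, e⟫ - ⟪x, e⟫) := by
      simp only [hs]
      rw [div_mul_cancel₀ _ (ne_of_gt hbx)]
    have h3 : ⟪w - v, e⟫ = -(⟪v, e⟫ - ⟪w, e⟫) := by
      rw [inner_sub_left]; ring
    have h4 : ⟪x - v, e⟫ = -(⟪v, e⟫ - ⟪x, e⟫) := by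
      rw [inner_sub_left]; ring
    rw [crs_formula, h1, h2, h3, h4]
    ring
  -- injectivity of slopes
  have hinj : ∀ w ∈ V.erase v, ∀ x ∈ V.erase v, w ≠ x → s w ≠ s x := by
    intro w hw x hx hwx hsx
    have hcrs : crs (w - v) (x - v) * ⟪e, e⟫ = 0 := by
      rw [hkey w hw x hx, hsx]; ring
    have hcrs0 : crs (w - v) (x - v) = 0 := by
      rcases mul_eq_zero.1 hcrs with h | h
      · exact h
      · linarith
    obtain ⟨hwne, hwV⟩ := Finset.mem_erase.1 hw
    obtain ⟨hxne, hxV⟩ := Finset.mem_erase.1 hx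
    exact no_three_collinear hvx (by rw [← hVext]; exact hwV) (by rw [← hVext]; exact hxV)
      (Ne.symm hwne) (Ne.symm hxne) hwx hcrs0
  obtain ⟨w1, hw1, hmax⟩ := (V.erase v).exists_max_image s hEne
  obtain ⟨w2, hw2, hmin⟩ := (V.erase v).exists_min_image s hEne
  have hsupp1 : ∀ x ∈ V, ⟪x - v, -Jr (w1 - v)⟫ ≤ 0 := by
    intro x hx
    rcases eq_or_ne x v with rfl | hxv
    · simp
    · have hxE : x ∈ V.erase v := Finset.mem_erase.2 ⟨hxv, hx⟩
      rw [inner_neg_right, neg_nonpos, inner_Jr]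
      have h := hkey w1 hw1 x hxE
      have hr : 0 ≤ (⟪v, e⟫ - ⟪w1, e⟫) * (⟪v, e⟫ - ⟪x, e⟫) * (s w1 - s x) :=
        mul_nonneg (mul_pos (hbpos w1 hw1) (hbpos x hxE)).le (by linarith [hmax x hxE])
      by_contra hcon
      push_neg at hcon
      have : crs (w1 - v) (x - v) * ⟪e, e⟫ < 0 := mul_neg_of_neg_of_pos hcon hee
      linarith
  have hsupp2 : ∀ x ∈ V, ⟪x - v, Jr (w2 - v)⟫ ≤ 0 := by
    intro x hx
    rcases eq_or_ne x v with rfl | hxv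
    · simp
    · have hxE : x ∈ V.erase v := Finset.mem_erase.2 ⟨hxv, hx⟩
      rw [inner_Jr]
      have h := hkey w2 hw2 x hxE
      have hr : (⟪v, e⟫ - ⟪w2, e⟫) * (⟪v, e⟫ - ⟪x, e⟫) * (s w2 - s x) ≤ 0 :=
        mul_nonpos_of_nonneg_of_nonpos (mul_pos (hbpos w2 hw2) (hbpos x hxE)).le
          (by linarith [hmin x hxE])
      by_contra hcon
      push_neg at hcon
      have : 0 < crs (w2 - v) (x - v) * ⟪e, e⟫ := mul_pos hcon hee
      linarith
  have huniq : ∀ z ∈ V.erase v, (∀ x ∈ V, ⟪x - v, -Jr (z - v)⟫ ≤ 0) → z = w1 := by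
    intro z hz hzsupp
    by_contra hne
    have hlt : s z < s w1 := lt_of_le_of_ne (hmax z hz) (hinj z hz w1 hw1 hne)
    have h := hzsupp w1 ((Finset.mem_erase.1 hw1).2)
    rw [inner_neg_right, neg_nonpos, inner_Jr] at h
    have hk := hkey z hz w1 hw1
    have hr : (⟪v, e⟫ - ⟪z, e⟫) * (⟪v, e⟫ - ⟪w1, e⟫) * (s z - s w1) < 0 :=
      mul_neg_of_pos_of_neg (mul_pos (hbpos z hz) (hbpos w1 hw1)) (by linarith)
    have : 0 ≤ crs (z - v) (w1 - v) * ⟪e, e⟫ := mul_nonneg h hee.le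
    linarith
  have hw12 : w1 ≠ w2 := by
    obtain ⟨x, hx, hxw⟩ : ∃ x ∈ V.erase v, x ≠ w1 := by
      have h2 : 1 < (V.erase v).card := by
        rw [Finset.card_erase_of_mem hv]; omega
      exact Finset.exists_mem_ne h2 w1
    have h1 : s x < s w1 := lt_of_le_of_ne (hmax x hx) (hinj x hx w1 hw1 hxw)
    have h2 : s w2 ≤ s x := hmin x hx
    intro hq
    rw [hq] at h1
    linarith
  exact ⟨w1, hw1, w2, hw2, hw12, hsupp1, hsupp2, huniq⟩

lemma Jr_neg (z : E2) : Jr (-z) = - Jr z := by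
  refine PiLp.ext fun i => ?_
  fin_cases i <;> simp [Jr]

lemma Jr_ne_zero {u : E2} (hu : u ≠ 0) : Jr u ≠ 0 := by
  intro h
  apply hu
  refine PiLp.ext fun i => ?_
  have h0 : Jr u 0 = 0 := by rw [h]; rfl
  have h1 : Jr u 1 = 0 := by rw [h]; rfl
  rw [Jr0] at h0
  rw [Jr1] at h1
  fin_cases i <;> simp_all
  

/-- if `D₀` is a set of `m` directions positively spanning `ℝ²`, then a
polytope `X ⊆ ℝ²` with exactly `n_v` vertices is determined by a set of directions
containing `D₀` of cardinality at most `(3 n_v + 1) + (m - 3)`, within the class of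
all polytopes in `ℝ²`. -/
theorem stmt_7 (m : ℕ) (D₀ : Finset (EuclideanSpace ℝ (Fin 2))) (hm : D₀.card = m)
    (hspan : ∀ x : EuclideanSpace ℝ (Fin 2), ∃ c : EuclideanSpace ℝ (Fin 2) → ℝ,
      (∀ d, 0 ≤ c d) ∧ x = ∑ d ∈ D₀, c d • d)
    (n_v : ℕ) (X : Set (EuclideanSpace ℝ (Fin 2))) (hX : IsPolytope X)
    (hcard : (Set.extremePoints ℝ X).ncard = n_v) :
    ∃ D : Finset (EuclideanSpace ℝ (Fin 2)), D₀ ⊆ D ∧ D.card ≤ (3 * n_v + 1) + (m - 3) ∧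
      Determines {Y | IsPolytope Y} D X := by
  classical
  obtain ⟨F, hFne, hXF⟩ := hX
  have hXpoly : IsPolytope X := ⟨F, hFne, hXF⟩
  have hXconv : Convex ℝ X := hXF ▸ convex_convexHull ℝ _
  have hXclosed : IsClosed X := hXF ▸ F.finite_toSet.isClosed_convexHull ℝ
  have hXne : X.Nonempty := by
    obtain ⟨x, hx⟩ := hFne
    exact ⟨x, hXF ▸ subset_convexHull ℝ _ hx⟩
  have hVsub : Set.extremePoints ℝ X ⊆ (F : Set E2) := hXF ▸ extremePoints_convexHull_subset
  have hVfin : (Set.extremePoints ℝ X).Finite := F.finite_toSet.subset hVsub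
  set V : Finset E2 := hVfin.toFinset with hVdef
  have hVcoe : (V : Set E2) = Set.extremePoints ℝ X := hVfin.coe_toFinset
  have hVcard : V.card = n_v := by rw [← hcard, ← hVcoe, Set.ncard_coe_finset]
  have hXV : X = convexHull ℝ (V : Set E2) := by
    have hcomp : IsCompact X := hXF ▸ F.finite_toSet.isCompact_convexHull ℝ
    have h1 : closure (convexHull ℝ (Set.extremePoints ℝ X)) = X :=
      closure_convexHull_extremePoints hcomp hXconv
    have h2 : convexHull ℝ (Set.extremePoints ℝ X)
        = closure (convexHull ℝ (Set.extremePoints ℝ X)) :=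
      (IsClosed.closure_eq (hVfin.isClosed_convexHull ℝ)).symm
    rw [hVcoe, h2, h1]
  have hVX : (V : Set E2) ⊆ X := by
    rw [hXV]; exact subset_convexHull ℝ _
  have hVne : V.Nonempty := by
    rw [← Finset.card_pos]
    have := (hXF ▸ F.finite_toSet.isCompact_convexHull ℝ : IsCompact X).extremePoints_nonempty hXne
    rw [← hVcoe] at this
    obtain ⟨x, hx⟩ := this
    exact Finset.card_pos.2 ⟨x, hx⟩
  have hnv1 : 1 ≤ n_v := by rw [← hVcard]; exact Finset.card_pos.2 hVne
  rcases eq_or_lt_of_le hnv1 with hn1 | hn1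
  · -- n_v = 1 : X is a point
    obtain ⟨v, hVv⟩ := Finset.card_eq_one.1 (by omega : V.card = 1)
    have hXs : X = {v} := by
      rw [hXV, hVv]
      simp [convexHull_singleton]
    refine ⟨D₀, Finset.Subset.refl _, by omega, ?_⟩
    intro Y hY hsupp
    obtain ⟨G, hGne, hYG⟩ := hY
    have hYpoly : IsPolytope Y := ⟨G, hGne, hYG⟩
    have hsuppX : ∀ d, supp X d = ⟪v, d⟫ := by
      intro d
      refine supp_eq hXpoly (by rw [hXs]; rfl) ?_
      intro x hx
      rw [hXs] at hx
      rw [hx]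
    have key : ∀ g ∈ G, g = v := by
      intro g hg
      have hgY : g ∈ Y := hYG ▸ subset_convexHull ℝ _ hg
      obtain ⟨c, hc0, hcg⟩ := hspan (g - v)
      have hterm : ∀ d ∈ D₀, c d * ⟪g - v, d⟫ ≤ 0 := by
        intro d hd
        have h1 : ⟪g, d⟫ ≤ supp Y d := inner_le_supp hYpoly hgY d
        have h2 : supp Y d = ⟪v, d⟫ := by rw [hsupp d hd, hsuppX d]
        have h3 : ⟪g - v, d⟫ ≤ 0 := by rw [inner_sub_left]; linarith
        exact mul_nonpos_of_nonneg_of_nonpos (hc0 d) h3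
      have hgv : ⟪g - v, g - v⟫ ≤ 0 := by
        have hexp : ⟪g - v, g - v⟫ = ∑ d ∈ D₀, c d * ⟪g - v, d⟫ := by
          nth_rewrite 2 [hcg]
          rw [inner_sum]
          exact Finset.sum_congr rfl fun d _ => real_inner_smul_right _ _ _
        rw [hexp]
        exact Finset.sum_nonpos hterm
      by_contra hne
      have := inner_self_pos_of_ne (sub_ne_zero.2 hne)
      linarith
    have hYX : Y = X := by
      rw [hXs]
      apply Set.Subset.antisymm
      · rw [hYG]
        apply convexHull_min _ (convex_singleton v)
        intro g hg
        exact key g hg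
      · obtain ⟨g, hg⟩ := hGne
        intro x hx
        cases hx
        rw [← key g hg]
        exact hYG ▸ subset_convexHull ℝ _ hg
    exact hYX
  · by_cases hn2 : n_v = 2
    · -- segment case
      obtain ⟨a, b, hab, hVab⟩ := Finset.card_eq_two.1 (by omega : V.card = 2)
      have haV : a ∈ V := by rw [hVab]; exact Finset.mem_insert_self a {b}
      have hbV : b ∈ V := by rw [hVab]; simp
      set u : E2 := b - a with hu
      have hune : u ≠ 0 := sub_ne_zero.2 (Ne.symm hab)
      have huu : 0 < ⟪u, u⟫ := inner_self_pos_of_ne hune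
      set r : E2 := Jr u with hr
      have hur : ⟪u, r⟫ = 0 := by rw [hr, inner_Jr]; exact crs_self u
      have hbu : ⟪b, u⟫ = ⟪a, u⟫ + ⟪u, u⟫ := by
        have h := inner_sub_left (𝕜 := ℝ) b a u
        rw [← hu] at h
        linarith
      have hbr : ⟪b, r⟫ = ⟪a, r⟫ := by
        have h := inner_sub_left (𝕜 := ℝ) b a r
        rw [← hu, hur] at h
        linarith
      have hdom : ∀ (d : E2) (M : ℝ), ⟪a, d⟫ ≤ M → ⟪b, d⟫ ≤ M → ∀ x ∈ X, ⟪x, d⟫ ≤ M := by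
        intro d M hda hdb x hx
        refine hull_inner_le (F := V) ?_ x (by rw [← hXV]; exact hx)
        intro w hw
        rw [hVab] at hw
        rcases Finset.mem_insert.1 hw with rfl | hw
        · exact hda
        · rw [Finset.mem_singleton.1 hw]; exact hdb
      have hsu : supp X u = ⟪b, u⟫ :=
        supp_eq hXpoly (hVX hbV) (hdom u _ (by linarith) le_rfl)
      have hsmu : supp X (-u) = ⟪a, -u⟫ := by
        refine supp_eq hXpoly (hVX haV) (hdom (-u) _ le_rfl ?_)
        rw [inner_neg_right, inner_neg_right]
        linarith
      have hsr : supp X r = ⟪a, r⟫ :=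
        supp_eq hXpoly (hVX haV) (hdom r _ le_rfl (le_of_eq hbr))
      have hsmr : supp X (-r) = ⟪a, -r⟫ := by
        refine supp_eq hXpoly (hVX haV) (hdom (-r) _ le_rfl ?_)
        rw [inner_neg_right, inner_neg_right]
        linarith
      set D : Finset E2 := insert u (insert (-u) (insert r (insert (-r) D₀))) with hD
      have hD0 : D₀ ⊆ D := by
        intro d hd
        simp [hD, hd]
      have hcardD : D.card ≤ m + 4 := by
        have c1 := Finset.card_insert_le (-r) D₀
        have c2 := Finset.card_insert_le r (insert (-r) D₀)
        have c3 := Finset.card_insert_le (-u) (insert r (insert (-r) D₀))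
        have c4 := Finset.card_insert_le u (insert (-u) (insert r (insert (-r) D₀)))
        rw [hD]
        omega
      refine ⟨D, hD0, by omega, ?_⟩
      intro Y hY hsD
      obtain ⟨G, hGne, hYG⟩ := hY
      have hYpoly : IsPolytope Y := ⟨G, hGne, hYG⟩
      have hmemu : u ∈ D := by simp [hD]
      have hmemmu : -u ∈ D := by simp [hD]
      have hmemr : r ∈ D := by simp [hD]
      have hmemmr : -r ∈ D := by simp [hD]
      have hYle : ∀ d ∈ D, ∀ y ∈ Y, ⟪y, d⟫ ≤ supp X d := fun d hd y hy =>
        (hsD d hd) ▸ inner_le_supp hYpoly hy d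
      have hsub : Y ⊆ X := by
        intro y hy
        have h1 : ⟪y, u⟫ ≤ ⟪b, u⟫ := by
          have := hYle u hmemu y hy; rwa [hsu] at this
        have h2 : ⟪a, u⟫ ≤ ⟪y, u⟫ := by
          have := hYle (-u) hmemmu y hy
          rw [hsmu, inner_neg_right, inner_neg_right] at this
          linarith
        have h3 : ⟪y, r⟫ = ⟪a, r⟫ := by
          have ha1 := hYle r hmemr y hy
          have ha2 := hYle (-r) hmemmr y hy
          rw [hsr] at ha1
          rw [hsmr, inner_neg_right, inner_neg_right] at ha2
          linarith
        set θ : ℝ := (⟪y, u⟫ - ⟪a, u⟫) / ⟪u, u⟫ with hθ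
        have hθ0 : 0 ≤ θ := div_nonneg (by linarith) huu.le
        have hθ1 : θ ≤ 1 := by
          rw [hθ, div_le_one huu]
          linarith
        have hcne : crs u r ≠ 0 := by
          have : crs u r = ⟪r, r⟫ := by rw [hr, inner_Jr]
          rw [this]
          exact ne_of_gt (inner_self_pos_of_ne (hr ▸ Jr_ne_zero hune))
        have hy_eq : y = a + θ • u := by
          apply eq_of_inner_inner u r _ _ hcne
          · rw [inner_add_right, real_inner_smul_right]
            have hmul : θ * ⟪u, u⟫ = ⟪y, u⟫ - ⟪a, u⟫ := div_mul_cancel₀ _ (ne_of_gt huu)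
            have hc1 : ⟪u, y⟫ = ⟪y, u⟫ := real_inner_comm _ _
            have hc2 : ⟪u, a⟫ = ⟪a, u⟫ := real_inner_comm _ _
            linarith
          · rw [inner_add_right, real_inner_smul_right]
            have hc1 : ⟪r, y⟫ = ⟪y, r⟫ := real_inner_comm _ _
            have hc2 : ⟪r, a⟫ = ⟪a, r⟫ := real_inner_comm _ _
            have hc3 : ⟪r, u⟫ = ⟪u, r⟫ := real_inner_comm _ _
            rw [hur] at hc3
            rw [hc3, mul_zero]
            linarith
        have hyseg : y ∈ segment ℝ a b := by
          rw [segment_eq_image']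
          refine ⟨θ, ⟨hθ0, hθ1⟩, ?_⟩
          rw [hy_eq, ← hu]
        have hseg : segment ℝ a b = X := by
          rw [hXV, hVab]
          rw [Finset.coe_insert, Finset.coe_singleton, convexHull_pair]
        rw [← hseg]
        exact hyseg
      have hbY : b ∈ Y := by
        obtain ⟨y, hyY, hye⟩ := exists_supp hYpoly u
        rw [hsD u hmemu, hsu] at hye
        have hstrict : ∀ w ∈ V, w ≠ b → ⟪w, u⟫ < ⟪b, u⟫ := by
          intro w hw hwb
          rw [hVab] at hw
          rcases Finset.mem_insert.1 hw with rfl | hw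
          · linarith
          · exact absurd (Finset.mem_singleton.1 hw) hwb
        have := unique_max hbV hstrict (by rw [← hXV]; exact hsub hyY) hye
        rwa [← this]
      have haY : a ∈ Y := by
        obtain ⟨y, hyY, hye⟩ := exists_supp hYpoly (-u)
        rw [hsD (-u) hmemmu, hsmu] at hye
        have hstrict : ∀ w ∈ V, w ≠ a → ⟪w, -u⟫ < ⟪a, -u⟫ := by
          intro w hw hwa
          rw [hVab] at hw
          rcases Finset.mem_insert.1 hw with rfl | hw
          · exact absurd rfl hwa
          · rw [Finset.mem_singleton.1 hw]
            rw [inner_neg_right, inner_neg_right]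
            linarith
        have := unique_max haV hstrict (by rw [← hXV]; exact hsub hyY) hye
        rwa [← this]
      have hXsubY : X ⊆ Y := by
        rw [hXV]
        apply convexHull_min _ (hYG ▸ convex_convexHull ℝ _)
        intro w hw
        rw [hVab] at hw
        rcases Finset.mem_insert.1 (by exact_mod_cast hw) with rfl | hw2
        · exact haY
        · rw [Finset.mem_singleton.1 hw2]
          exact hbY
      exact Set.Subset.antisymm hsub hXsubY
    · -- polygon case, n_v ≥ 3
      have hn3 : 3 ≤ V.card := by omega
      have hedge := fun (v : E2) (hv : v ∈ V) => vertex_edges hXV hVcoe hn3 hv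
      choose w1f hw1 w2f hw2 h12 hs1 hs2 huq using hedge
      have hexpo : ∀ v ∈ V, ∃ e : E2, ∀ w ∈ V, w ≠ v → ⟪w, e⟫ < ⟪v, e⟫ := by
        intro v hv
        have hvex : v ∈ Set.extremePoints ℝ X := by rw [← hVcoe]; exact hv
        exact exists_expose (extreme_not_mem_erase hXV hvex)
      choose ef hef using hexpo
      set U1 : Finset E2 := V.attach.image (fun p => -Jr (w1f p.1 p.2 - p.1)) with hU1
      set W : Finset E2 := V.attach.image (fun p => ef p.1 p.2) with hW
      set D : Finset E2 := (D₀ ∪ U1) ∪ W with hD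
      have hD0 : D₀ ⊆ D := Finset.Subset.trans Finset.subset_union_left Finset.subset_union_left
      have hcardD : D.card ≤ m + 2 * n_v := by
        have h1 := Finset.card_union_le (D₀ ∪ U1) W
        have h2 := Finset.card_union_le D₀ U1
        have h3 : U1.card ≤ V.card := by
          rw [hU1]
          exact le_trans Finset.card_image_le (le_of_eq V.card_attach)
        have h4 : W.card ≤ V.card := by
          rw [hW]
          exact le_trans Finset.card_image_le (le_of_eq V.card_attach)
        rw [hD]
        omega
      refine ⟨D, hD0, by omega, ?_⟩
      have hsuppu1 : ∀ (v : E2) (hv : v ∈ V),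
          supp X (-Jr (w1f v hv - v)) = ⟪v, -Jr (w1f v hv - v)⟫ := by
        intro v hv
        refine supp_eq hXpoly (hVX hv) ?_
        intro x hx
        refine hull_inner_le (F := V) ?_ x (by rw [← hXV]; exact hx)
        intro w hw
        have h := hs1 v hv w hw
        rw [inner_sub_left] at h
        linarith
      have hsuppu2 : ∀ (v : E2) (hv : v ∈ V),
          supp X (Jr (w2f v hv - v)) = ⟪v, Jr (w2f v hv - v)⟫ := by
        intro v hv
        refine supp_eq hXpoly (hVX hv) ?_
        intro x hx
        refine hull_inner_le (F := V) ?_ x (by rw [← hXV]; exact hx)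
        intro w hw
        have h := hs2 v hv w hw
        rw [inner_sub_left] at h
        linarith
      have hJrflip : ∀ p q : E2, -Jr (p - q) = Jr (q - p) := by
        intro p q
        have h := Jr_neg (q - p)
        rw [neg_sub] at h
        rw [h, neg_neg]
      have hu2mem : ∀ (v : E2) (hv : v ∈ V), Jr (w2f v hv - v) ∈ U1 := by
        intro v hv
        obtain ⟨hw'ne, hw'V⟩ := Finset.mem_erase.1 (hw2 v hv)
        have hvE : v ∈ V.erase (w2f v hv) := Finset.mem_erase.2 ⟨Ne.symm hw'ne, hv⟩
        have hsupw : ∀ x ∈ V, ⟪x - w2f v hv, -Jr (v - w2f v hv)⟫ ≤ 0 := by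
          intro x hx
          have h1 := hs2 v hv x hx
          have h2 : ⟪w2f v hv - v, Jr (w2f v hv - v)⟫ = 0 := by
            rw [inner_Jr]; exact crs_self _
          have h4 : x - w2f v hv = (x - v) - (w2f v hv - v) := by abel
          rw [hJrflip v (w2f v hv), h4, inner_sub_left, h2]
          linarith
        have hveq : v = w1f (w2f v hv) hw'V := huq (w2f v hv) hw'V v hvE hsupw
        refine Finset.mem_image.2 ⟨⟨w2f v hv, hw'V⟩, Finset.mem_attach _ _, ?_⟩
        show -Jr (w1f (w2f v hv) hw'V - w2f v hv) = Jr (w2f v hv - v)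
        rw [← hveq, hJrflip v (w2f v hv)]
      intro Y hY hsD
      obtain ⟨G, hGne, hYG⟩ := hY
      have hYpoly : IsPolytope Y := ⟨G, hGne, hYG⟩
      have hu1D : ∀ (v : E2) (hv : v ∈ V), -Jr (w1f v hv - v) ∈ D := fun v hv =>
        Finset.mem_union_left _ (Finset.mem_union_right _
          (Finset.mem_image.2 ⟨⟨v, hv⟩, Finset.mem_attach _ _, rfl⟩))
      have hu2D : ∀ (v : E2) (hv : v ∈ V), Jr (w2f v hv - v) ∈ D := fun v hv =>
        Finset.mem_union_left _ (Finset.mem_union_right _ (hu2mem v hv))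
      have heD : ∀ (v : E2) (hv : v ∈ V), ef v hv ∈ D := fun v hv =>
        Finset.mem_union_right _ (Finset.mem_image.2 ⟨⟨v, hv⟩, Finset.mem_attach _ _, rfl⟩)
      have hsub : Y ⊆ X := by
        intro y hy
        by_contra hyX
        obtain ⟨f, u0, hfs, hfy⟩ := geometric_hahn_banach_closed_point hXconv hXclosed hyX
        set z : E2 := (InnerProductSpace.toDual ℝ E2).symm f with hz
        have hzval : ∀ x : E2, ⟪x, z⟫ = f x := fun x => by
          rw [real_inner_comm]; exact InnerProductSpace.toDual_symm_apply
        obtain ⟨v, hvV, hvmax⟩ := V.exists_max_image (fun x => ⟪x, z⟫) hVne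
        obtain ⟨hw1ne, hw1V⟩ := Finset.mem_erase.1 (hw1 v hvV)
        obtain ⟨hw2ne, hw2V⟩ := Finset.mem_erase.1 (hw2 v hvV)
        have hvex : v ∈ Set.extremePoints ℝ X := by rw [← hVcoe]; exact hvV
        have hw1ex : w1f v hvV ∈ Set.extremePoints ℝ X := by rw [← hVcoe]; exact hw1V
        have hw2ex : w2f v hvV ∈ Set.extremePoints ℝ X := by rw [← hVcoe]; exact hw2V
        have hcne : crs (w1f v hvV - v) (w2f v hvV - v) ≠ 0 :=
          no_three_collinear hvex hw1ex hw2ex (Ne.symm hw1ne) (Ne.symm hw2ne) (h12 v hvV)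
        have hcpos : 0 < crs (w1f v hvV - v) (w2f v hvV - v) := by
          have h := hs1 v hvV (w2f v hvV) hw2V
          rw [inner_neg_right, neg_nonpos, inner_Jr] at h
          exact lt_of_le_of_ne h (Ne.symm hcne)
        set t1 : E2 := w1f v hvV - v with ht1
        set t2 : E2 := w2f v hvV - v with ht2
        set c : ℝ := crs t1 t2 with hc
        set α : ℝ := -⟪t2, z⟫ / c with hα
        set β : ℝ := -⟪t1, z⟫ / c with hβ
        have ht1z : ⟪t1, z⟫ ≤ 0 := by
          rw [ht1, inner_sub_left]
          have := hvmax (w1f v hvV) hw1V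
          linarith
        have ht2z : ⟪t2, z⟫ ≤ 0 := by
          rw [ht2, inner_sub_left]
          have := hvmax (w2f v hvV) hw2V
          linarith
        have hα0 : 0 ≤ α := div_nonneg (by linarith) hcpos.le
        have hβ0 : 0 ≤ β := div_nonneg (by linarith) hcpos.le
        have hdecomp : z = α • (-Jr t1) + β • (Jr t2) := by
          apply eq_of_inner_inner t1 t2 _ _ hcne
          · rw [inner_add_right, real_inner_smul_right, real_inner_smul_right,
              inner_neg_right, inner_Jr, inner_Jr, crs_self, crs_swap t2 t1, ← hc]
            rw [hβ]
            field_simp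
            ring
          · rw [inner_add_right, real_inner_smul_right, real_inner_smul_right,
              inner_neg_right, inner_Jr, inner_Jr, crs_self, ← hc]
            rw [hα]
            field_simp
            ring
        have hy1 : ⟪y, -Jr t1⟫ ≤ ⟪v, -Jr t1⟫ := by
          have h := inner_le_supp hYpoly hy (-Jr t1)
          rw [hsD _ (hu1D v hvV), hsuppu1 v hvV] at h
          exact h
        have hy2 : ⟪y, Jr t2⟫ ≤ ⟪v, Jr t2⟫ := by
          have h := inner_le_supp hYpoly hy (Jr t2)
          rw [hsD _ (hu2D v hvV), hsuppu2 v hvV] at h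
          exact h
        have hcontr : ⟪y, z⟫ ≤ ⟪v, z⟫ := by
          rw [hdecomp, inner_add_right, inner_add_right, real_inner_smul_right,
            real_inner_smul_right, real_inner_smul_right, real_inner_smul_right]
          have hm1 := mul_le_mul_of_nonneg_left hy1 hα0
          have hm2 := mul_le_mul_of_nonneg_left hy2 hβ0
          linarith
        have h1 : f v < u0 := hfs v (hVX hvV)
        have h2 := hzval v
        have h3 := hzval y
        linarith
      have hVY : ∀ v ∈ V, v ∈ Y := by
        intro v hvV
        obtain ⟨y, hyY, hye⟩ := exists_supp hYpoly (ef v hvV)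
        have hsX : supp X (ef v hvV) = ⟪v, ef v hvV⟫ := by
          refine supp_eq hXpoly (hVX hvV) ?_
          intro x hx
          refine hull_inner_le (F := V) ?_ x (by rw [← hXV]; exact hx)
          intro w hw
          rcases eq_or_ne w v with rfl | hne
          · exact le_rfl
          · exact (hef v hvV w hw hne).le
        rw [hsD _ (heD v hvV), hsX] at hye
        have := unique_max hvV (hef v hvV) (by rw [← hXV]; exact hsub hyY) hye
        rwa [← this]
      have hXsubY : X ⊆ Y := by
        rw [hXV]
        exact convexHull_min (fun w hw => hVY w hw) (hYG ▸ convex_convexHull ℝ _)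
      exact Set.Subset.antisymm hsub hXsubY
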